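/- For the two-level (bi-fidelity) Monte Carlo estimator \hat{F} = \bar{F}^0_{n} + c(\bar{F}^1_{m} - \bar{F}^1_{n}) with n < m, where the first n samples of F^1 are coupled with the n samples of F^0 (common random numbers) and the remaining samples are independent, the variance equals \sigma_0^2/n + (1/n - 1/m)(c^2 \sigma_1^2 - 2c\,\sigma_{01}). -/

import Mathlib

open MeasureTheory ProbabilityTheory

/-- Covariance of two real random variables. -/
noncomputable def covar {Ω : Type*} [MeasurableSpace Ω] (μ : Measure Ω) (X Y : Ω → ℝ) : ℝ :=
  ∫ ω, (X ω - ∫ x, X x ∂μ) * (Y ω - ∫ x, Y x ∂μ) ∂μ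

section aux
variable {Ω : Type*} [MeasurableSpace Ω] {μ : Measure Ω} [IsProbabilityMeasure μ]

lemma integrable_mul_L2 {f g : Ω → ℝ} (hf : MemLp f 2 μ) (hg : MemLp g 2 μ) :
    Integrable (fun ω => f ω * g ω) μ := by
  have hfg : Integrable (fun ω => (f ω + g ω) ^ 2) μ := by
    have := (hf.add hg).integrable_sq
    simpa [Pi.add_apply] using this
  have h : Integrable (fun ω => ((f ω + g ω) ^ 2 - f ω ^ 2 - g ω ^ 2) * (1 / 2 : ℝ)) μ :=
    ((hfg.sub hf.integrable_sq).sub hg.integrable_sq).mul_const _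
  have heq : (fun ω => f ω * g ω)
      = fun ω => ((f ω + g ω) ^ 2 - f ω ^ 2 - g ω ^ 2) * (1 / 2 : ℝ) := by
    funext ω; ring
  rw [heq]; exact h

lemma covar_comm (X Y : Ω → ℝ) : covar μ X Y = covar μ Y X := by
  unfold covar; simp_rw [mul_comm]

lemma covar_const_mul (a : ℝ) (X Y : Ω → ℝ) :
    covar μ (fun ω => a * X ω) Y = a * covar μ X Y := by
  unfold covar
  rw [integral_const_mul]
  conv_rhs => rw [← integral_const_mul]
  congr 1; funext ω; ring

lemma covar_sum_left {ι : Type*} (s : Finset ι) (X : ι → Ω → ℝ) (Y : Ω → ℝ)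
    (hX : ∀ i ∈ s, MemLp (X i) 2 μ) (hY : MemLp Y 2 μ) :
    covar μ (fun ω => ∑ i ∈ s, X i ω) Y = ∑ i ∈ s, covar μ (X i) Y := by
  unfold covar
  have hE : ∫ x, (∑ i ∈ s, X i x) ∂μ = ∑ i ∈ s, ∫ x, X i x ∂μ :=
    integral_finset_sum s (fun i hi => ((hX i hi).integrable one_le_two))
  rw [hE]
  have hpt : ∀ ω, (∑ i ∈ s, X i ω - ∑ i ∈ s, ∫ x, X i x ∂μ) * (Y ω - ∫ x, Y x ∂μ)
      = ∑ i ∈ s, (X i ω - ∫ x, X i x ∂μ) * (Y ω - ∫ x, Y x ∂μ) := by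
    intro ω; rw [← Finset.sum_sub_distrib, Finset.sum_mul]
  simp_rw [hpt]
  exact integral_finset_sum s fun i hi =>
    integrable_mul_L2 ((hX i hi).sub (memLp_const _)) (hY.sub (memLp_const _))

lemma covar_add_left {X X' Y : Ω → ℝ} (hX : MemLp X 2 μ) (hX' : MemLp X' 2 μ)
    (hY : MemLp Y 2 μ) :
    covar μ (fun ω => X ω + X' ω) Y = covar μ X Y + covar μ X' Y := by
  unfold covar
  rw [integral_add (hX.integrable one_le_two) (hX'.integrable one_le_two)]
  have hpt : ∀ ω, (X ω + X' ω - (∫ x, X x ∂μ + ∫ x, X' x ∂μ)) * (Y ω - ∫ x, Y x ∂μ)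
      = (X ω - ∫ x, X x ∂μ) * (Y ω - ∫ x, Y x ∂μ)
        + (X' ω - ∫ x, X' x ∂μ) * (Y ω - ∫ x, Y x ∂μ) := fun ω => by ring
  simp_rw [hpt]
  exact integral_add
    (integrable_mul_L2 (hX.sub (memLp_const _)) (hY.sub (memLp_const _)))
    (integrable_mul_L2 (hX'.sub (memLp_const _)) (hY.sub (memLp_const _)))

lemma variance_eq_covar {X : Ω → ℝ} (h : MemLp X 2 μ) : variance X μ = covar μ X X := by
  rw [variance_eq_integral h.aestronglyMeasurable.aemeasurable]
  unfold covar
  congr 1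
  funext ω
  simp [sq]

lemma covar_bilin {f1 f2 g1 g2 : Ω → ℝ} (p q r s : ℝ)
    (h1 : MemLp f1 2 μ) (h2 : MemLp f2 2 μ) (h3 : MemLp g1 2 μ) (h4 : MemLp g2 2 μ) :
    covar μ (fun ω => p * f1 ω + q * f2 ω) (fun ω => r * g1 ω + s * g2 ω)
      = p * r * covar μ f1 g1 + p * s * covar μ f1 g2
        + q * r * covar μ f2 g1 + q * s * covar μ f2 g2 := by
  have hG : MemLp (fun ω => r * g1 ω + s * g2 ω) 2 μ := (h3.const_mul r).add (h4.const_mul s)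
  rw [covar_add_left (h1.const_mul p) (h2.const_mul q) hG, covar_const_mul, covar_const_mul]
  rw [covar_comm f1, covar_add_left (h3.const_mul r) (h4.const_mul s) h1,
    covar_const_mul, covar_const_mul,
    covar_comm f2, covar_add_left (h3.const_mul r) (h4.const_mul s) h2,
    covar_const_mul, covar_const_mul,
    covar_comm g1 f1, covar_comm g2 f1, covar_comm g1 f2, covar_comm g2 f2]
  ring

end aux

/-- variance of the bi-fidelity (two-level) Monte Carlo estimator with
common random numbers on the first `n` samples. -/
theorem bifidelity_variance
    {Ω : Type*} [MeasurableSpace Ω] (μ : Measure Ω) [IsProbabilityMeasure μ]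
    (n m : ℕ) (hn : 0 < n) (hnm : n < m)
    (F0 F1 : ℕ → Ω → ℝ) (c σ0sq σ1sq σ01 : ℝ)
    (hL0 : ∀ j, MemLp (F0 j) 2 μ) (hL1 : ∀ j, MemLp (F1 j) 2 μ)
    (hv0 : ∀ j < n, variance (F0 j) μ = σ0sq)
    (hv1 : ∀ j < m, variance (F1 j) μ = σ1sq)
    (hcov : ∀ j < n, covar μ (F0 j) (F1 j) = σ01)
    (hind00 : ∀ j k, j ≠ k → covar μ (F0 j) (F0 k) = 0)
    (hind11 : ∀ j k, j ≠ k → covar μ (F1 j) (F1 k) = 0)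
    (hind01 : ∀ j k, j ≠ k → covar μ (F0 j) (F1 k) = 0) :
    variance (fun ω =>
        (n : ℝ)⁻¹ * ∑ j ∈ Finset.range n, F0 j ω
          + c * ((m : ℝ)⁻¹ * ∑ j ∈ Finset.range m, F1 j ω
              - (n : ℝ)⁻¹ * ∑ j ∈ Finset.range n, F1 j ω)) μ
      = σ0sq / n + (1 / n - 1 / m) * (c ^ 2 * σ1sq - 2 * c * σ01) := by
  have hn0 : (n : ℝ) ≠ 0 := Nat.cast_ne_zero.mpr hn.ne'
  have hm0 : (m : ℝ) ≠ 0 := Nat.cast_ne_zero.mpr (hn.trans hnm).ne'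
  set a : ℕ → ℝ := fun j => if j < n then (n : ℝ)⁻¹ else 0 with ha
  set b : ℕ → ℝ := fun j => if j < n then c * ((m : ℝ)⁻¹ - (n : ℝ)⁻¹) else c * (m : ℝ)⁻¹ with hb
  set Z : ℕ → Ω → ℝ := fun j ω => a j * F0 j ω + b j * F1 j ω with hZ
  have hsplit : ∀ (f : ℕ → ℝ), ∑ j ∈ Finset.range m, f j
      = ∑ j ∈ Finset.range n, f j + ∑ j ∈ Finset.Ico n m, f j := by
    intro f
    rw [Finset.range_eq_Ico, Finset.range_eq_Ico]
    exact (Finset.sum_Ico_consecutive f (Nat.zero_le n) hnm.le).symm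
  have hfun : (fun ω =>
        (n : ℝ)⁻¹ * ∑ j ∈ Finset.range n, F0 j ω
          + c * ((m : ℝ)⁻¹ * ∑ j ∈ Finset.range m, F1 j ω
              - (n : ℝ)⁻¹ * ∑ j ∈ Finset.range n, F1 j ω))
      = fun ω => ∑ j ∈ Finset.range m, Z j ω := by
    funext ω
    rw [hsplit (fun j => Z j ω), hsplit (fun j => F1 j ω)]
    have h1 : ∑ j ∈ Finset.range n, Z j ω
        = ∑ j ∈ Finset.range n, ((n : ℝ)⁻¹ * F0 j ω + c * ((m : ℝ)⁻¹ - (n : ℝ)⁻¹) * F1 j ω) :=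
      Finset.sum_congr rfl fun j hj => by
        simp [hZ, ha, hb, Finset.mem_range.mp hj]
    have h2 : ∑ j ∈ Finset.Ico n m, Z j ω
        = ∑ j ∈ Finset.Ico n m, (c * (m : ℝ)⁻¹ * F1 j ω) :=
      Finset.sum_congr rfl fun j hj => by
        have hjn : ¬ j < n := not_lt.mpr (Finset.mem_Ico.mp hj).1
        simp [hZ, ha, hb, hjn]
    rw [h1, h2]
    simp only [Finset.sum_add_distrib, ← Finset.mul_sum]
    ring
  have hZL2 : ∀ j, MemLp (Z j) 2 μ := fun j =>
    ((hL0 j).const_mul _).add ((hL1 j).const_mul _)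
  have hsumL2 : MemLp (fun ω => ∑ j ∈ Finset.range m, Z j ω) 2 μ := by
    exact memLp_finset_sum (Finset.range m) (fun j _ => hZL2 j)
  rw [hfun, variance_eq_covar hsumL2,
    covar_sum_left (Finset.range m) Z _ (fun j _ => hZL2 j) hsumL2]
  have hinner : ∀ j ∈ Finset.range m, covar μ (Z j) (fun ω => ∑ k ∈ Finset.range m, Z k ω)
      = ∑ k ∈ Finset.range m, covar μ (Z j) (Z k) := by
    intro j _
    rw [covar_comm, covar_sum_left (Finset.range m) Z _ (fun k _ => hZL2 k) (hZL2 j)]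
    exact Finset.sum_congr rfl fun k _ => covar_comm _ _
  rw [Finset.sum_congr rfl hinner]
  have hexp : ∀ j k, covar μ (Z j) (Z k)
      = a j * a k * covar μ (F0 j) (F0 k) + a j * b k * covar μ (F0 j) (F1 k)
        + b j * a k * covar μ (F1 j) (F0 k) + b j * b k * covar μ (F1 j) (F1 k) :=
    fun j k => covar_bilin _ _ _ _ (hL0 j) (hL1 j) (hL0 k) (hL1 k)
  have hdiag : ∀ j ∈ Finset.range m, ∑ k ∈ Finset.range m, covar μ (Z j) (Z k)
      = (if j < n then
          (n : ℝ)⁻¹ ^ 2 * σ0sq + 2 * (n : ℝ)⁻¹ * (c * ((m : ℝ)⁻¹ - (n : ℝ)⁻¹)) * σ01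
            + (c * ((m : ℝ)⁻¹ - (n : ℝ)⁻¹)) ^ 2 * σ1sq
        else (c * (m : ℝ)⁻¹) ^ 2 * σ1sq) := by
    intro j hj
    rw [Finset.sum_eq_single_of_mem j hj]
    · rw [hexp j j]
      by_cases hjn : j < n
      · have e0 : covar μ (F0 j) (F0 j) = σ0sq := by
          rw [← variance_eq_covar (hL0 j)]; exact hv0 j hjn
        have e1 : covar μ (F1 j) (F1 j) = σ1sq := by
          rw [← variance_eq_covar (hL1 j)]; exact hv1 j (hjn.trans hnm)
        have e01 : covar μ (F0 j) (F1 j) = σ01 := hcov j hjn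
        have e10 : covar μ (F1 j) (F0 j) = σ01 := by rw [covar_comm]; exact e01
        simp only [ha, hb, if_pos hjn, e0, e1, e01, e10]
        ring
      · have e1 : covar μ (F1 j) (F1 j) = σ1sq := by
          rw [← variance_eq_covar (hL1 j)]; exact hv1 j (Finset.mem_range.mp hj)
        simp only [ha, hb, if_neg hjn, e1]
        ring
    · intro k _ hkj
      rw [hexp j k, hind00 j k (Ne.symm hkj), hind01 j k (Ne.symm hkj),
        hind11 j k (Ne.symm hkj), covar_comm (F1 j) (F0 k), hind01 k j hkj]
      ring
  rw [Finset.sum_congr rfl hdiag, hsplit]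
  have hs1 : ∑ j ∈ Finset.range n, (if j < n then
          (n : ℝ)⁻¹ ^ 2 * σ0sq + 2 * (n : ℝ)⁻¹ * (c * ((m : ℝ)⁻¹ - (n : ℝ)⁻¹)) * σ01
            + (c * ((m : ℝ)⁻¹ - (n : ℝ)⁻¹)) ^ 2 * σ1sq
        else (c * (m : ℝ)⁻¹) ^ 2 * σ1sq)
      = (n : ℝ) * ((n : ℝ)⁻¹ ^ 2 * σ0sq + 2 * (n : ℝ)⁻¹ * (c * ((m : ℝ)⁻¹ - (n : ℝ)⁻¹)) * σ01
            + (c * ((m : ℝ)⁻¹ - (n : ℝ)⁻¹)) ^ 2 * σ1sq) := by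
    rw [Finset.sum_congr rfl (fun j hj => if_pos (Finset.mem_range.mp hj)),
      Finset.sum_const, Finset.card_range, nsmul_eq_mul]
  have hs2 : ∑ j ∈ Finset.Ico n m, (if j < n then
          (n : ℝ)⁻¹ ^ 2 * σ0sq + 2 * (n : ℝ)⁻¹ * (c * ((m : ℝ)⁻¹ - (n : ℝ)⁻¹)) * σ01
            + (c * ((m : ℝ)⁻¹ - (n : ℝ)⁻¹)) ^ 2 * σ1sq
        else (c * (m : ℝ)⁻¹) ^ 2 * σ1sq)
      = ((m : ℝ) - (n : ℝ)) * ((c * (m : ℝ)⁻¹) ^ 2 * σ1sq) := by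
    rw [Finset.sum_congr rfl
        (fun j hj => if_neg (not_lt.mpr (Finset.mem_Ico.mp hj).1)),
      Finset.sum_const, Nat.card_Ico, nsmul_eq_mul, Nat.cast_sub hnm.le]
  rw [hs1, hs2]
  field_simp
  ring
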